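/- arXiv:2004.08503 — 6 statements merged into one kernel-verified Lean document; each statement's English description precedes it below -/
import Mathlib

section
/- Let p ≥ 1 and N ≥ 1. Let D be a (p+1)×(p+1) real matrix (rows and columns indexed 0,…,p) whose column sums satisfy ∑_{i=0}^{p} D_{ij} = 1 if j = p, −1 if j = 0, and 0 otherwise. For each element index k ∈ ℤ/Nℤ, let F^k ∈ ℝ^{p+1} be given nodal flux values and let F̂^k ∈ ℝ be a given numerical flux value at the interface shared by elements k and k+1. Define the strong-form residual R^k ∈ ℝ^{p+1} by R^k_i = −(D F^k)_i − b^k_i, where b^k_p = F̂^k − F^k_p, b^k_0 = −(F̂^{k−1} − F^k_0), and b^k_i = 0 for 0 < i < p. Then the method is conservative: ∑_{k ∈ ℤ/Nℤ} ∑_{i=0}^{p} R^k_i = 0. -/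
/-- Conservation of the one-dimensional strong-form DG-SEM discretization on a
periodic mesh of `N` elements: if the differentiation matrix `D` satisfies the
summation-by-parts column-sum property, then the total residual vanishes. -/
theorem strong_form_dg_conservation (p : ℕ) (hp : 1 ≤ p) (N : ℕ) [NeZero N]
    (D : Matrix (Fin (p + 1)) (Fin (p + 1)) ℝ)
    (hD : ∀ j : Fin (p + 1), ∑ i : Fin (p + 1), D i j =
      if j = Fin.last p then 1 else if j = 0 then -1 else 0)
    (F : ZMod N → Fin (p + 1) → ℝ) (Fhat : ZMod N → ℝ)
    (b : ZMod N → Fin (p + 1) → ℝ)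
    (hb : ∀ k : ZMod N, ∀ i : Fin (p + 1), b k i =
      if i = Fin.last p then Fhat k - F k (Fin.last p)
      else if i = 0 then -(Fhat (k - 1) - F k 0) else 0)
    (R : ZMod N → Fin (p + 1) → ℝ)
    (hR : ∀ k : ZMod N, ∀ i : Fin (p + 1), R k i = -(D.mulVec (F k)) i - b k i) :
    ∑ k : ZMod N, ∑ i : Fin (p + 1), R k i = 0 := by
  have hp0 : p ≠ 0 := by omega
  have hlast0 : (Fin.last p : Fin (p + 1)) ≠ 0 := by
    simp [Fin.ext_iff, Fin.last]; omega
  have key : ∀ (g : Fin (p + 1) → ℝ),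
      ∑ j : Fin (p + 1), (if j = Fin.last p then g j
        else if j = 0 then -g j else 0) = g (Fin.last p) - g 0 := by
    intro g
    have : (fun j : Fin (p+1) => if j = Fin.last p then g j
        else if j = 0 then -g j else 0)
        = fun j => (if j = Fin.last p then g j else 0)
          + (if j = 0 then -g j else 0) := by
      funext j
      by_cases h1 : j = Fin.last p
      · subst h1; simp [hlast0]
      · by_cases h2 : j = 0 <;> simp [h1, h2, hp0]
    rw [this, Finset.sum_add_distrib, Finset.sum_ite_eq' Finset.univ,
      Finset.sum_ite_eq' Finset.univ]
    simp; ring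
  have hmul : ∀ k : ZMod N, ∑ i : Fin (p + 1), (D.mulVec (F k)) i
      = F k (Fin.last p) - F k 0 := by
    intro k
    simp only [Matrix.mulVec, dotProduct]
    rw [Finset.sum_comm]
    have h1 : ∀ j : Fin (p + 1), ∑ i : Fin (p + 1), D i j * F k j
        = (if j = Fin.last p then F k j else if j = 0 then -F k j else 0) := by
      intro j
      rw [← Finset.sum_mul, hD j]
      by_cases h1 : j = Fin.last p
      · simp [h1]
      · by_cases h2 : j = 0 <;> simp [h1, h2]
    rw [Finset.sum_congr rfl fun j _ => h1 j, key]
  have hbsum : ∀ k : ZMod N, ∑ i : Fin (p + 1), b k i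
      = (Fhat k - F k (Fin.last p)) + -(Fhat (k - 1) - F k 0) := by
    intro k
    have : (fun i : Fin (p+1) => b k i)
        = fun i => (if i = Fin.last p then Fhat k - F k (Fin.last p) else 0)
          + (if i = 0 then -(Fhat (k - 1) - F k 0) else 0) := by
      funext i
      rw [hb k i]
      by_cases h1 : i = Fin.last p
      · subst h1; simp [hlast0]
      · by_cases h2 : i = 0 <;> simp [h1, h2, hp0]
    rw [this, Finset.sum_add_distrib, Finset.sum_ite_eq' Finset.univ,
      Finset.sum_ite_eq' Finset.univ]
    simp
  have hksum : ∀ k : ZMod N, ∑ i : Fin (p + 1), R k i = Fhat (k - 1) - Fhat k := by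
    intro k
    simp only [hR k]
    rw [Finset.sum_sub_distrib, Finset.sum_neg_distrib, hmul, hbsum]
    ring
  rw [Finset.sum_congr rfl fun k _ => hksum k, Finset.sum_sub_distrib]
  rw [show (∑ x : ZMod N, Fhat (x - 1)) = ∑ x : ZMod N, Fhat x from
    Fintype.sum_equiv (Equiv.subRight (1 : ZMod N)) _ _ (fun x => rfl)]
  ring
end

section
/- Let E be a real vector space, A ⊆ E a convex set, and d ≥ 1 an integer; set γ = 2d. Let u ∈ A, let m > 0, Δt > 0, let α̃ ∈ [0,1], and for each k ∈ {1,…,d} let r_k^+, r_k^− ∈ E satisfy u + (Δt/m)·γ·α̃ • r_k^+ ∈ A and u − (Δt/m)·γ·α̃ • r_k^− ∈ A. Then for any coefficients α_k^+, α_k^− ∈ [0, α̃] (k = 1,…,d), the flux-corrected value u' = u + (Δt/m)·∑_{k=1}^{d} ( α_k^+ • r_k^+ − α_k^− • r_k^− ) belongs to A. -/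
private lemma seg_mem {E : Type*} [AddCommGroup E] [Module ℝ E]
    {A : Set E} (hA : Convex ℝ A) {u : E} (hu : u ∈ A) {c : ℝ} {r : E}
    (h : u + c • r ∈ A) {t : ℝ} (ht0 : 0 ≤ t) (ht1 : t ≤ 1) :
    u + (t * c) • r ∈ A := by
  have := hA hu h (by linarith : (0:ℝ) ≤ 1 - t) ht0 (by ring)
  convert this using 1
  module

/-- Subcell convex limiting preserves convex invariant sets: if the provisional
states `u ± (Δt/m)·γ·α̃ • r_k^±` (with `γ = 2d`) all lie in the convex set `A`
containing `u`, then for any face limiting coefficients `α_k^± ∈ [0, α̃]` the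
flux-corrected value lies in `A`. -/
theorem subcell_convex_limiting_mem {E : Type*} [AddCommGroup E] [Module ℝ E]
    {A : Set E} (hA : Convex ℝ A) (d : ℕ) (hd : 1 ≤ d)
    (u : E) (hu : u ∈ A) (m Δt : ℝ) (hm : 0 < m) (hΔt : 0 < Δt)
    (αt : ℝ) (hαt : αt ∈ Set.Icc (0:ℝ) 1)
    (rp rm : Fin d → E)
    (hrp : ∀ k : Fin d, u + ((Δt / m) * (2 * d) * αt) • rp k ∈ A)
    (hrm : ∀ k : Fin d, u - ((Δt / m) * (2 * d) * αt) • rm k ∈ A)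
    (αp αm : Fin d → ℝ)
    (hαp : ∀ k : Fin d, αp k ∈ Set.Icc 0 αt) (hαm : ∀ k : Fin d, αm k ∈ Set.Icc 0 αt) :
    u + (Δt / m) • (∑ k : Fin d, (αp k • rp k - αm k • rm k)) ∈ A := by
  have hdpos : (0:ℝ) < 2 * d := by
    have : (1:ℝ) ≤ d := by exact_mod_cast hd
    linarith
  -- key memberships with α_k^± in place of α̃
  have keyp : ∀ k : Fin d, u + ((Δt / m) * (2 * d) * αp k) • rp k ∈ A := by
    intro k
    obtain ⟨h0, h1⟩ := hαp k
    rcases eq_or_lt_of_le hαt.1 with hz | hz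
    · have : αp k = 0 := le_antisymm (h1.trans hz.symm.le) h0
      simpa [this] using hu
    · have : (Δt / m) * (2 * d) * αp k
          = (αp k / αt) * ((Δt / m) * (2 * d) * αt) := by
        field_simp
      rw [this]
      exact seg_mem hA hu (hrp k) (div_nonneg h0 hz.le) (by
        rw [div_le_one hz]; exact h1)
  have keym : ∀ k : Fin d, u - ((Δt / m) * (2 * d) * αm k) • rm k ∈ A := by
    intro k
    obtain ⟨h0, h1⟩ := hαm k
    rcases eq_or_lt_of_le hαt.1 with hz | hz
    · have : αm k = 0 := le_antisymm (h1.trans hz.symm.le) h0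
      simpa [this] using hu
    · have : (Δt / m) * (2 * d) * αm k
          = (αm k / αt) * ((Δt / m) * (2 * d) * αt) := by
        field_simp
      have h' := hrm k
      rw [sub_eq_add_neg, ← smul_neg] at h' ⊢
      rw [this]
      exact seg_mem hA hu h' (div_nonneg h0 hz.le) (by
        rw [div_le_one hz]; exact h1)
  -- convex combination over 2d points
  set w : Fin d ⊕ Fin d → ℝ := fun _ => 1 / (2 * d) with hw
  set z : Fin d ⊕ Fin d → E :=
    Sum.elim (fun k => u + ((Δt / m) * (2 * d) * αp k) • rp k)
             (fun k => u - ((Δt / m) * (2 * d) * αm k) • rm k) with hz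
  have hd0' : (d:ℝ) ≠ 0 := by positivity
  have hsum1 : ∑ _i : Fin d ⊕ Fin d, (1 / (2 * (d:ℝ))) = 1 := by
    rw [Finset.sum_const, Finset.card_univ, Fintype.card_sum, Fintype.card_fin,
      nsmul_eq_mul]
    push_cast
    field_simp
    ring
  have hmem := hA.sum_mem (t := (Finset.univ : Finset (Fin d ⊕ Fin d)))
    (w := w) (z := z)
    (fun i _ => by simp only [hw]; positivity)
    hsum1
    (fun i _ => by cases i with
      | inl k => exact keyp k
      | inr k => exact keym k)
  convert hmem using 1
  rw [Fintype.sum_sum_type, ← Finset.sum_add_distrib]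
  have hd0 : (d:ℝ) ≠ 0 := by positivity
  have hu' : u = ∑ _k : Fin d, ((d:ℝ)⁻¹) • u := by
    rw [Finset.sum_const, Finset.card_univ, Fintype.card_fin,
      ← Nat.cast_smul_eq_nsmul ℝ, smul_smul, mul_inv_cancel₀ hd0, one_smul]
  conv_lhs => rw [hu', Finset.smul_sum, ← Finset.sum_add_distrib]
  refine Finset.sum_congr rfl fun k _ => ?_
  simp only [hw, hz, Sum.elim_inl, Sum.elim_inr]
  match_scalars <;> field_simp <;> ring
end

section
/- Let u, u_min, u_max ∈ ℝ with u_min ≤ u ≤ u_max, let m > 0 and Δt > 0, let J be a finite index set with fluxes f_j ∈ ℝ for j ∈ J, and let α̃ ∈ [0,1] satisfy u + (Δt/m)·α̃·∑_{j∈J} max(f_j, 0) ≤ u_max and u + (Δt/m)·α̃·∑_{j∈J} min(f_j, 0) ≥ u_min. Then for any coefficients α_j ∈ [0, α̃] (j ∈ J), the limited update u' = u + (Δt/m)·∑_{j∈J} α_j f_j satisfies u_min ≤ u' ≤ u_max. -/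
/-- Correctness of the Zalesak-type flux limiter: if the provisional coefficient
`α̃` limits the sums of positive and negative parts of the antidiffusive fluxes
so that the bounds `u_min`, `u_max` are respected, then any per-flux
coefficients `α_j ≤ α̃` yield a bounds-preserving update. -/
theorem zalesak_limiter_bounds {ι : Type*} (J : Finset ι)
    (u umin umax : ℝ) (hmin : umin ≤ u) (hmax : u ≤ umax)
    (m Δt : ℝ) (hm : 0 < m) (hΔt : 0 < Δt)
    (f : ι → ℝ) (αt : ℝ) (hαt : αt ∈ Set.Icc (0:ℝ) 1)
    (hpos : u + (Δt / m) * αt * ∑ j ∈ J, max (f j) 0 ≤ umax)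
    (hneg : umin ≤ u + (Δt / m) * αt * ∑ j ∈ J, min (f j) 0)
    (α : ι → ℝ) (hα : ∀ j ∈ J, α j ∈ Set.Icc 0 αt) :
    umin ≤ u + (Δt / m) * ∑ j ∈ J, α j * f j ∧
      u + (Δt / m) * ∑ j ∈ J, α j * f j ≤ umax := by
  have hc : 0 ≤ Δt / m := le_of_lt (div_pos hΔt hm)
  have hub : ∑ j ∈ J, α j * f j ≤ αt * ∑ j ∈ J, max (f j) 0 := by
    rw [Finset.mul_sum]
    refine Finset.sum_le_sum fun j hj => ?_
    obtain ⟨h0, h1⟩ := hα j hj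
    calc α j * f j ≤ α j * max (f j) 0 := by
          exact mul_le_mul_of_nonneg_left (le_max_left _ _) h0
      _ ≤ αt * max (f j) 0 := by
          exact mul_le_mul_of_nonneg_right h1 (le_max_right _ _)
  have hlb : αt * ∑ j ∈ J, min (f j) 0 ≤ ∑ j ∈ J, α j * f j := by
    rw [Finset.mul_sum]
    refine Finset.sum_le_sum fun j hj => ?_
    obtain ⟨h0, h1⟩ := hα j hj
    calc αt * min (f j) 0 ≤ α j * min (f j) 0 := by
          exact mul_le_mul_of_nonpos_right h1 (min_le_right _ _)
      _ ≤ α j * f j := mul_le_mul_of_nonneg_left (min_le_left _ _) h0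
  constructor
  · calc umin ≤ u + (Δt / m) * (αt * ∑ j ∈ J, min (f j) 0) := by
          rw [← mul_assoc]; exact hneg
      _ ≤ u + (Δt / m) * ∑ j ∈ J, α j * f j := by
          gcongr
  · calc u + (Δt / m) * ∑ j ∈ J, α j * f j
        ≤ u + (Δt / m) * (αt * ∑ j ∈ J, max (f j) 0) := by gcongr
      _ ≤ umax := by rw [← mul_assoc]; exact hpos
end

section
/- Fix a real number γ > 1, a real number r, and an integer n ≥ 1. For (ρ, m, ℰ) ∈ ℝ × ℝⁿ × ℝ with ρ > 0, define the specific internal energy e = ℰ/ρ − ‖m‖²/(2ρ²) and, when e > 0, the specific entropy s = (1/(γ−1))·log e − log ρ. Then the set A(r) = { (ρ, m, ℰ) ∈ ℝ × ℝⁿ × ℝ : ρ > 0, e > 0, s ≥ r } is a convex subset of ℝ × ℝⁿ × ℝ. -/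
/-- Quadratic-over-linear polynomial inequality (Cauchy–Schwarz). -/
lemma quad_lin_poly (a b ρ₁ ρ₂ t₁ t₂ : ℝ) (ha : 0 ≤ a) (hb : 0 ≤ b) :
    (a*t₁+b*t₂)^2 * (ρ₁*ρ₂) ≤ (a*(t₁^2*ρ₂) + b*(t₂^2*ρ₁)) * (a*ρ₁+b*ρ₂) := by
  nlinarith [mul_nonneg (mul_nonneg ha hb) (sq_nonneg (t₁*ρ₂ - t₂*ρ₁)),
    sq_nonneg (t₁*ρ₂ - t₂*ρ₁)]

/-- Quadratic-over-linear convexity inequality. -/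
lemma quad_lin (a b ρ₁ ρ₂ t₁ t₂ : ℝ) (ha : 0 ≤ a) (hb : 0 ≤ b)
    (h₁ : 0 < ρ₁) (h₂ : 0 < ρ₂) (hd : 0 < a*ρ₁ + b*ρ₂) :
    (a*t₁+b*t₂)^2 / (a*ρ₁+b*ρ₂) ≤ a*(t₁^2/ρ₁) + b*(t₂^2/ρ₂) := by
  have h12 : (0:ℝ) < ρ₁*ρ₂ := mul_pos h₁ h₂
  have hrw : a*(t₁^2/ρ₁) + b*(t₂^2/ρ₂) = (a*(t₁^2*ρ₂) + b*(t₂^2*ρ₁)) / (ρ₁*ρ₂) := by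
    field_simp
  rw [hrw, div_le_div_iff₀ hd h12]
  exact quad_lin_poly a b ρ₁ ρ₂ t₁ t₂ ha hb

/-- Convexity of the invariant set `A(r)` of the compressible Euler equations in
conserved variables `(ρ, m, ℰ)`: positive density, positive specific internal
energy `e = ℰ/ρ - ‖m‖²/(2ρ²)`, and specific entropy
`s = (1/(γ-1))·log e - log ρ` at least `r`. -/
theorem euler_invariant_set_convex (γ : ℝ) (hγ : 1 < γ) (r : ℝ) (n : ℕ) (hn : 1 ≤ n) :
    Convex ℝ {x : ℝ × EuclideanSpace ℝ (Fin n) × ℝ |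
      0 < x.1 ∧
      0 < x.2.2 / x.1 - ‖x.2.1‖ ^ 2 / (2 * x.1 ^ 2) ∧
      r ≤ (1 / (γ - 1)) * Real.log (x.2.2 / x.1 - ‖x.2.1‖ ^ 2 / (2 * x.1 ^ 2))
            - Real.log x.1} := by
  have hγ1 : (0:ℝ) < γ - 1 := by linarith
  set c : ℝ := Real.exp ((γ - 1) * r) with hc
  have hcpos : 0 < c := Real.exp_pos _
  -- key reformulation: membership is equivalent to ℰ - ‖m‖²/(2ρ) ≥ c ρ^γ (given ρ>0)
  have key : ∀ ρ ℰ : ℝ, ∀ m : EuclideanSpace ℝ (Fin n), 0 < ρ →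
      ((0 < ℰ / ρ - ‖m‖ ^ 2 / (2 * ρ ^ 2) ∧
        r ≤ (1 / (γ - 1)) * Real.log (ℰ / ρ - ‖m‖ ^ 2 / (2 * ρ ^ 2)) - Real.log ρ)
       ↔ c * ρ ^ γ + ‖m‖ ^ 2 / (2 * ρ) ≤ ℰ) := by
    intro ρ ℰ m hρ
    have hρ2 : (0:ℝ) < 2 * ρ ^ 2 := by positivity
    set e : ℝ := ℰ / ρ - ‖m‖ ^ 2 / (2 * ρ ^ 2) with he
    have hrpow : 0 < ρ ^ γ := Real.rpow_pos_of_pos hρ γ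
    have hrpow1 : 0 < ρ ^ (γ - 1) := Real.rpow_pos_of_pos hρ (γ - 1)
    have hsplit : ρ ^ γ = ρ ^ (γ - 1) * ρ := by
      have h : ρ ^ γ = ρ ^ ((γ - 1) + 1) := by norm_num
      rw [h, Real.rpow_add hρ, Real.rpow_one]
    have heρ : e * ρ = ℰ - ‖m‖ ^ 2 / (2 * ρ) := by
      rw [he]; field_simp
    constructor
    · rintro ⟨hepos, hs⟩
      -- from entropy inequality: c * ρ^(γ-1) ≤ e
      have h1 : (γ - 1) * r + (γ - 1) * Real.log ρ ≤ Real.log e := by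
        have := mul_le_mul_of_nonneg_left hs (le_of_lt hγ1)
        have h1γ : (γ - 1) * ((1 / (γ - 1)) * Real.log e - Real.log ρ)
            = Real.log e - (γ - 1) * Real.log ρ := by
          field_simp
        nlinarith [this]
      have h2 : c * ρ ^ (γ - 1) ≤ e := by
        have h1' := Real.exp_le_exp.mpr h1
        rw [Real.exp_add, Real.exp_log hepos] at h1'
        calc c * ρ ^ (γ - 1)
            = Real.exp ((γ - 1) * r) * Real.exp ((γ - 1) * Real.log ρ) := by
              rw [Real.rpow_def_of_pos hρ, mul_comm (Real.log ρ)]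
          _ ≤ e := h1'
      have h3 : c * ρ ^ γ ≤ e * ρ := by
        rw [hsplit, ← mul_assoc]
        exact mul_le_mul_of_nonneg_right h2 hρ.le
      rw [heρ] at h3; linarith
    · intro h
      have h3 : c * ρ ^ γ ≤ e * ρ := by rw [heρ]; linarith
      have h2 : c * ρ ^ (γ - 1) ≤ e := by
        rw [hsplit, ← mul_assoc] at h3
        exact le_of_mul_le_mul_right h3 hρ
      have hepos : 0 < e := lt_of_lt_of_le (by positivity) h2
      refine ⟨hepos, ?_⟩
      have h4 : (γ - 1) * r + (γ - 1) * Real.log ρ ≤ Real.log e := by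
        have hlog := Real.log_le_log (by positivity) h2
        rwa [Real.log_mul (ne_of_gt hcpos) (ne_of_gt hrpow1), hc, Real.log_exp,
          Real.log_rpow hρ] at hlog
      have h5 : r + Real.log ρ ≤ (1 / (γ - 1)) * Real.log e := by
        rw [div_mul_eq_mul_div, one_mul, le_div_iff₀ hγ1]
        nlinarith [h4]
      linarith
  rintro ⟨ρ₁, m₁, E₁⟩ ⟨h₁ρ, h₁⟩ ⟨ρ₂, m₂, E₂⟩ ⟨h₂ρ, h₂⟩ a b ha hb hab
  have h₁' := (key ρ₁ E₁ m₁ h₁ρ).mp h₁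
  have h₂' := (key ρ₂ E₂ m₂ h₂ρ).mp h₂
  have hρc : 0 < a * ρ₁ + b * ρ₂ := by
    rcases lt_or_ge 0 a with h | h
    · have : 0 ≤ b * ρ₂ := mul_nonneg hb h₂ρ.le
      nlinarith
    · have ha0 : a = 0 := le_antisymm h ha
      have : b = 1 := by linarith
      rw [ha0, this]; simpa using h₂ρ
  have hpt : a • ((ρ₁, m₁, E₁) : ℝ × EuclideanSpace ℝ (Fin n) × ℝ) + b • (ρ₂, m₂, E₂)
      = (a * ρ₁ + b * ρ₂, a • m₁ + b • m₂, a * E₁ + b * E₂) := by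
    simp [Prod.ext_iff, smul_eq_mul]
  rw [Set.mem_setOf_eq, hpt]
  refine ⟨hρc, (key (a * ρ₁ + b * ρ₂) (a * E₁ + b * E₂) (a • m₁ + b • m₂) hρc).mpr ?_⟩
  -- norm bound
  have hnorm : ‖a • m₁ + b • m₂‖ ≤ a * ‖m₁‖ + b * ‖m₂‖ := by
    calc ‖a • m₁ + b • m₂‖ ≤ ‖a • m₁‖ + ‖b • m₂‖ := norm_add_le _ _
    _ = a * ‖m₁‖ + b * ‖m₂‖ := by
        rw [norm_smul, norm_smul, Real.norm_eq_abs, Real.norm_eq_abs,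
          abs_of_nonneg ha, abs_of_nonneg hb]
  have hnorm2 : ‖a • m₁ + b • m₂‖ ^ 2 ≤ (a * ‖m₁‖ + b * ‖m₂‖) ^ 2 := by
    apply sq_le_sq' _ hnorm
    have : 0 ≤ a * ‖m₁‖ + b * ‖m₂‖ := by positivity
    nlinarith [norm_nonneg (a • m₁ + b • m₂)]
  -- kinetic part
  have hkin : ‖a • m₁ + b • m₂‖ ^ 2 / (2 * (a * ρ₁ + b * ρ₂))
      ≤ a * (‖m₁‖ ^ 2 / (2 * ρ₁)) + b * (‖m₂‖ ^ 2 / (2 * ρ₂)) := by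
    have step1 : ‖a • m₁ + b • m₂‖ ^ 2 / (2 * (a * ρ₁ + b * ρ₂))
        ≤ (a * ‖m₁‖ + b * ‖m₂‖) ^ 2 / (2 * (a * ρ₁ + b * ρ₂)) :=
      div_le_div_of_nonneg_right hnorm2 (by positivity) |>.trans_eq rfl
    have step2 := quad_lin a b ρ₁ ρ₂ ‖m₁‖ ‖m₂‖ ha hb h₁ρ h₂ρ hρc
    calc ‖a • m₁ + b • m₂‖ ^ 2 / (2 * (a * ρ₁ + b * ρ₂))
        ≤ (a * ‖m₁‖ + b * ‖m₂‖) ^ 2 / (2 * (a * ρ₁ + b * ρ₂)) := step1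
      _ = ((a * ‖m₁‖ + b * ‖m₂‖) ^ 2 / (a * ρ₁ + b * ρ₂)) / 2 := by
          rw [div_div, mul_comm 2 (a * ρ₁ + b * ρ₂)]
      _ ≤ (a * (‖m₁‖ ^ 2 / ρ₁) + b * (‖m₂‖ ^ 2 / ρ₂)) / 2 := by linarith
      _ = a * (‖m₁‖ ^ 2 / (2 * ρ₁)) + b * (‖m₂‖ ^ 2 / (2 * ρ₂)) := by ring
  -- pressure part via convexity of rpow
  have hrpow : (a * ρ₁ + b * ρ₂) ^ γ ≤ a * ρ₁ ^ γ + b * ρ₂ ^ γ := by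
    have := (convexOn_rpow (le_of_lt hγ)).2 (Set.mem_Ici.mpr h₁ρ.le)
      (Set.mem_Ici.mpr h₂ρ.le) ha hb hab
    simpa [smul_eq_mul] using this
  have hpres : c * (a * ρ₁ + b * ρ₂) ^ γ ≤ a * (c * ρ₁ ^ γ) + b * (c * ρ₂ ^ γ) :=
    calc c * (a * ρ₁ + b * ρ₂) ^ γ ≤ c * (a * ρ₁ ^ γ + b * ρ₂ ^ γ) :=
          mul_le_mul_of_nonneg_left hrpow hcpos.le
      _ = a * (c * ρ₁ ^ γ) + b * (c * ρ₂ ^ γ) := by ring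
  calc c * (a * ρ₁ + b * ρ₂) ^ γ + ‖a • m₁ + b • m₂‖ ^ 2 / (2 * (a * ρ₁ + b * ρ₂))
      ≤ a * (c * ρ₁ ^ γ + ‖m₁‖ ^ 2 / (2 * ρ₁)) + b * (c * ρ₂ ^ γ + ‖m₂‖ ^ 2 / (2 * ρ₂)) := by
        have e1 : a * (c * ρ₁ ^ γ + ‖m₁‖ ^ 2 / (2 * ρ₁)) + b * (c * ρ₂ ^ γ + ‖m₂‖ ^ 2 / (2 * ρ₂))
            = (a * (c * ρ₁ ^ γ) + b * (c * ρ₂ ^ γ))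
              + (a * (‖m₁‖ ^ 2 / (2 * ρ₁)) + b * (‖m₂‖ ^ 2 / (2 * ρ₂))) := by ring
        rw [e1]
        exact add_le_add hpres hkin
    _ ≤ a * E₁ + b * E₂ := by
        have t1 := mul_le_mul_of_nonneg_left h₁' ha
        have t2 := mul_le_mul_of_nonneg_left h₂' hb
        linarith
end

section
/- For an integer p ≥ 1, let D̂ denote the (p+1)×(p+1) real matrix with rows and columns indexed by 0,…,p defined by D̂_{0,0} = −1/2, D̂_{p,p} = 1/2, D̂_{i,i+1} = 1/2 for 0 ≤ i ≤ p−1, D̂_{i,i−1} = −1/2 for 1 ≤ i ≤ p, and all other entries zero. Then the kernel of D̂ consists exactly of the constant vectors: D̂ v = 0 if and only if v_0 = v_1 = ⋯ = v_p. -/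
/-- The sparse low-order differentiation matrix `D̂`: `-1/2` at the `(0,0)` entry,
`1/2` at the `(p,p)` entry, `1/2` on the superdiagonal, `-1/2` on the
subdiagonal, and `0` elsewhere. -/
noncomputable def sparseDiff (p : ℕ) : Matrix (Fin (p + 1)) (Fin (p + 1)) ℝ := fun i j =>
  if (j : ℕ) = (i : ℕ) + 1 then 1 / 2
  else if (i : ℕ) = (j : ℕ) + 1 then -(1 / 2)
  else if i = j ∧ (i : ℕ) = 0 then -(1 / 2)
  else if i = j ∧ (i : ℕ) = p then 1 / 2
  else 0

lemma sparseDiff_row (p : ℕ) (hp : 1 ≤ p) (v : Fin (p + 1) → ℝ) (i : Fin (p + 1)) :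
    (sparseDiff p).mulVec v i
      = (1 / 2) * v ⟨min ((i : ℕ) + 1) p, by omega⟩ - (1 / 2) * v ⟨(i : ℕ) - 1, by omega⟩ := by
  set a : Fin (p + 1) := ⟨min ((i : ℕ) + 1) p, by omega⟩ with ha
  set b : Fin (p + 1) := ⟨(i : ℕ) - 1, by omega⟩ with hb
  have hi := i.isLt
  have hav : (a : ℕ) = min ((i : ℕ) + 1) p := rfl
  have hbv : (b : ℕ) = (i : ℕ) - 1 := rfl
  have hentry : ∀ j : Fin (p + 1), sparseDiff p i j * v j
      = (if j = a then (1 / 2 : ℝ) * v j else 0)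
        + (if j = b then -(1 / 2 : ℝ) * v j else 0) := by
    intro j
    have hj := j.isLt
    simp only [sparseDiff, Fin.ext_iff, hav, hbv]
    split_ifs <;> first | ring1 | (exfalso; omega)
  unfold Matrix.mulVec dotProduct
  calc (∑ j, sparseDiff p i j * v j)
      = ∑ j, ((if j = a then (1 / 2 : ℝ) * v j else 0)
        + (if j = b then -(1 / 2 : ℝ) * v j else 0)) :=
        Finset.sum_congr rfl fun j _ => hentry j
    _ = (1 / 2) * v a + (-(1 / 2) * v b) := by
        rw [Finset.sum_add_distrib, Finset.sum_ite_eq' _ a, Finset.sum_ite_eq' _ b]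
        simp
    _ = (1 / 2) * v a - (1 / 2) * v b := by ring

/-- The kernel of the sparse low-order differentiation matrix `D̂` consists
exactly of the constant vectors. -/
theorem sparseDiff_kernel_eq_constants (p : ℕ) (hp : 1 ≤ p) (v : Fin (p + 1) → ℝ) :
    (sparseDiff p).mulVec v = 0 ↔ ∀ i j : Fin (p + 1), v i = v j := by
  constructor
  · intro h
    have hrow : ∀ i : Fin (p + 1),
        v ⟨min ((i : ℕ) + 1) p, by omega⟩ = v ⟨(i : ℕ) - 1, by omega⟩ := by
      intro i
      have := sparseDiff_row p hp v i
      rw [h] at this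
      have h0 : (0 : Fin (p+1) → ℝ) i = 0 := rfl
      rw [h0] at this
      linarith [this]
    have key : ∀ k : ℕ, ∀ hk : k < p + 1, v ⟨k, hk⟩ = v ⟨0, by omega⟩ := by
      intro k
      induction k using Nat.strong_induction_on with
      | _ k ih =>
        intro hk
        match k, hk with
        | 0, _ => rfl
        | 1, hk =>
          have := hrow ⟨0, by omega⟩
          have e1 : (⟨min (0 + 1) p, by omega⟩ : Fin (p+1)) = ⟨1, hk⟩ := by
            rw [Fin.ext_iff]; simp; omega
          have e2 : (⟨0 - 1, by omega⟩ : Fin (p+1)) = ⟨0, by omega⟩ := by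
            rw [Fin.ext_iff]
          rw [e1, e2] at this
          exact this
        | (k + 2), hk =>
          have := hrow ⟨k + 1, by omega⟩
          have e1 : (⟨min ((k + 1) + 1) p, by omega⟩ : Fin (p+1)) = ⟨k + 2, hk⟩ := by
            rw [Fin.ext_iff]; simp; omega
          have e2 : (⟨(k + 1) - 1, by omega⟩ : Fin (p+1)) = ⟨k, by omega⟩ := by
            rw [Fin.ext_iff]; simp
          rw [e1, e2] at this
          rw [this]
          exact ih k (by omega) (by omega)
    intro i j
    have hi := key (i : ℕ) i.isLt
    have hj := key (j : ℕ) j.isLt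
    simp only [Fin.eta] at hi hj
    rw [hi, hj]
  · intro h
    funext i
    rw [sparseDiff_row p hp v i]
    rw [h ⟨min ((i : ℕ) + 1) p, by omega⟩ ⟨(i : ℕ) - 1, by omega⟩]
    simp
end

section
/- Let p ≥ 1 and let D̂ denote the (p+1)×(p+1) real matrix with rows and columns indexed by 0,…,p defined by D̂_{0,0} = −1/2, D̂_{p,p} = 1/2, D̂_{i,i+1} = 1/2 for 0 ≤ i ≤ p−1, D̂_{i,i−1} = −1/2 for 1 ≤ i ≤ p, and all other entries zero. Let M be a (p+1)×(p+1) diagonal matrix with strictly positive diagonal entries, and set N = (p+1)². Then for every b ∈ ℝ^N whose entries sum to zero, there exist x, y ∈ ℝ^N such that (M ⊗ D̂)ᵀ x + (D̂ ⊗ M)ᵀ y = b, where ⊗ denotes the Kronecker product of matrices. -/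
open Kronecker

namespace MetricAux

lemma sd_cases (p : ℕ) (l j : Fin (p+1)) :
    sparseDiff p l j =
      if (j : ℕ) = (l : ℕ) + 1 then 1/2
      else if (l : ℕ) = (j : ℕ) + 1 then -(1/2)
      else if (l : ℕ) = (j : ℕ) ∧ (l : ℕ) = 0 then -(1/2)
      else if (l : ℕ) = (j : ℕ) ∧ (l : ℕ) = p then 1/2 else 0 := by
  unfold sparseDiff
  simp only [Fin.ext_iff]

noncomputable def rec2 (s : ℕ → ℝ) : ℕ → ℝ
  | 0 => 0
  | 1 => -2 * s 0
  | (n+2) => rec2 s n - 2 * s (n+1)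

lemma rec2_sum (s : ℕ → ℝ) : ∀ n, rec2 s n + rec2 s (n+1)
    = -2 * ∑ k ∈ Finset.range (n+1), s k := by
  intro n
  induction n with
  | zero => simp [rec2]
  | succ n ih =>
    rw [Finset.sum_range_succ]
    have h2 : rec2 s (n+2) = rec2 s n - 2 * s (n+1) := rfl
    rw [h2]
    linarith

lemma mulVecT (p : ℕ) (u : Fin (p+1) → ℝ) (j : Fin (p+1)) :
    (sparseDiff p).transpose.mulVec u j = ∑ l, sparseDiff p l j * u l := by
  simp [Matrix.mulVec, dotProduct, Matrix.transpose_apply]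

lemma sum_pair_eval {n : ℕ} (g : Fin n → ℝ) (a b : Fin n) (hab : a ≠ b)
    (h0 : ∀ l, l ≠ a → l ≠ b → g l = 0) : ∑ l, g l = g a + g b := by
  classical
  rw [← Finset.sum_pair hab]
  refine (Finset.sum_subset (Finset.subset_univ _) ?_).symm
  intro l _ hl
  simp only [Finset.mem_insert, Finset.mem_singleton] at hl
  push_neg at hl
  exact h0 l hl.1 hl.2

lemma exists_solve (p : ℕ) (hp : 1 ≤ p) (s : Fin (p+1) → ℝ)
    (hs : ∑ i, s i = 0) :
    ∃ u : Fin (p+1) → ℝ, (sparseDiff p).transpose.mulVec u = s := by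
  classical
  set sE : ℕ → ℝ := fun n => if h : n < p+1 then s ⟨n, h⟩ else 0 with hsE
  have hsEeq : ∀ i : Fin (p+1), sE (i : ℕ) = s i := by
    intro i; rw [hsE]; exact dif_pos i.isLt
  have hsum : ∑ k ∈ Finset.range (p+1), sE k = 0 := by
    rw [← Fin.sum_univ_eq_sum_range]
    rw [Finset.sum_congr rfl (fun i _ => hsEeq i)]
    exact hs
  refine ⟨fun l => rec2 sE (l : ℕ), ?_⟩
  funext j
  rw [mulVecT]
  rcases Nat.lt_trichotomy (j : ℕ) 0 with h | hj0 | hjpos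
  · omega
  · -- j = 0 : support {0, 1}
    set a : Fin (p+1) := ⟨0, by omega⟩ with ha
    set c : Fin (p+1) := ⟨1, by omega⟩ with hc
    have hav : (a : ℕ) = 0 := rfl
    have hcv : (c : ℕ) = 1 := rfl
    have hac : a ≠ c := by simp only [ne_eq, Fin.ext_iff, hav, hcv]; omega
    rw [sum_pair_eval _ a c hac ?side]
    case side =>
      intro l hla hlc
      simp only [ne_eq, Fin.ext_iff, hav] at hla
      simp only [ne_eq, Fin.ext_iff, hcv] at hlc
      rw [sd_cases]
      split_ifs with h1 h2 h3 h4 <;> first | omega | (rw [zero_mul])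
    have e0 : sparseDiff p a j = -(1/2) := by
      rw [sd_cases, hav]
      rw [if_neg (by omega), if_neg (by omega), if_pos ⟨by omega, rfl⟩]
    have e1 : sparseDiff p c j = -(1/2) := by
      rw [sd_cases, hcv]
      rw [if_neg (by omega), if_pos (by omega)]
    rw [e0, e1, hav, hcv]
    have hr0 : rec2 sE 0 = 0 := rfl
    have hr1 : rec2 sE 1 = -2 * sE 0 := rfl
    rw [hr0, hr1]
    have : sE 0 = s j := by rw [← hsEeq j, hj0]
    rw [this]; ring
  · rcases Nat.lt_or_ge (j : ℕ) p with hjp | hjp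
    · -- 0 < j < p : support {j-1, j+1}
      set a : Fin (p+1) := ⟨(j:ℕ) - 1, by omega⟩ with ha
      set c : Fin (p+1) := ⟨(j:ℕ) + 1, by omega⟩ with hc
      have hav : (a : ℕ) = (j:ℕ) - 1 := rfl
      have hcv : (c : ℕ) = (j:ℕ) + 1 := rfl
      have hac : a ≠ c := by simp only [ne_eq, Fin.ext_iff, hav, hcv]; omega
      rw [sum_pair_eval _ a c hac ?side]
      case side =>
        intro l hla hlc
        simp only [ne_eq, Fin.ext_iff, hav] at hla
        simp only [ne_eq, Fin.ext_iff, hcv] at hlc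
        rw [sd_cases]
        split_ifs with h1 h2 h3 h4 <;> first | omega | (rw [zero_mul])
      have e0 : sparseDiff p a j = 1/2 := by
        rw [sd_cases, hav, if_pos (by omega)]
      have e1 : sparseDiff p c j = -(1/2) := by
        rw [sd_cases, hcv, if_neg (by omega), if_pos (by omega)]
      rw [e0, e1, hav, hcv]
      have hrec : rec2 sE ((j:ℕ) + 1) = rec2 sE ((j:ℕ) - 1) - 2 * sE (j:ℕ) := by
        have h : (j:ℕ) = ((j:ℕ) - 1) + 1 := by omega
        rw [show (j:ℕ) + 1 = ((j:ℕ) - 1) + 2 by omega]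
        show rec2 sE ((j:ℕ) - 1) - 2 * sE (((j:ℕ) - 1) + 1) = _
        rw [← h]
      rw [hrec, hsEeq j]; ring
    · -- j = p : support {p-1, p}
      have hjp' : (j : ℕ) = p := by omega
      set a : Fin (p+1) := ⟨p - 1, by omega⟩ with ha
      set c : Fin (p+1) := ⟨p, by omega⟩ with hc
      have hav : (a : ℕ) = p - 1 := rfl
      have hcv : (c : ℕ) = p := rfl
      have hac : a ≠ c := by simp only [ne_eq, Fin.ext_iff, hav, hcv]; omega
      rw [sum_pair_eval _ a c hac ?side]
      case side =>
        intro l hla hlc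
        simp only [ne_eq, Fin.ext_iff, hav] at hla
        simp only [ne_eq, Fin.ext_iff, hcv] at hlc
        rw [sd_cases]
        split_ifs with h1 h2 h3 h4 <;> first | omega | (rw [zero_mul])
      have e0 : sparseDiff p a j = 1/2 := by
        rw [sd_cases, hav, if_pos (by omega)]
      have e1 : sparseDiff p c j = 1/2 := by
        rw [sd_cases, hcv, if_neg (by omega), if_neg (by omega),
          if_neg (by omega), if_pos ⟨by omega, rfl⟩]
      rw [e0, e1, hav, hcv]
      have hkey : rec2 sE (p - 1) + rec2 sE p
          = -2 * ∑ k ∈ Finset.range p, sE k := by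
        have := rec2_sum sE (p - 1)
        rwa [show (p - 1) + 1 = p by omega] at this
      have hsp : ∑ k ∈ Finset.range p, sE k = -(sE p) := by
        have := hsum
        rw [Finset.sum_range_succ] at this
        linarith
      have hspj : sE p = s j := by rw [← hsEeq j, hjp']
      rw [show rec2 sE p = rec2 sE ((⟨p, by omega⟩ : Fin (p+1)) : ℕ) from rfl] at hkey
      calc 1/2 * rec2 sE (p-1) + 1/2 * rec2 sE p
          = (rec2 sE (p-1) + rec2 sE p) / 2 := by ring
        _ = s j := by rw [hkey, hsp, hspj]; ring



lemma kron_left {n : ℕ} (w : Fin n → ℝ) (D : Matrix (Fin n) (Fin n) ℝ)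
    (x : Fin n × Fin n → ℝ) (i j : Fin n) :
    ((Matrix.diagonal w) ⊗ₖ D).transpose.mulVec x (i, j)
      = w i * ∑ l, D l j * x (i, l) := by
  classical
  simp only [Matrix.mulVec, dotProduct, Matrix.transpose_apply,
    Matrix.kroneckerMap_apply, Fintype.sum_prod_type]
  rw [Finset.sum_eq_single i]
  · simp only [Matrix.diagonal_apply_eq, Finset.mul_sum]
    exact Finset.sum_congr rfl fun l _ => by ring
  · intro k _ hk
    apply Finset.sum_eq_zero
    intro l _
    rw [Matrix.diagonal_apply_ne w hk, zero_mul, zero_mul]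
  · intro h; exact absurd (Finset.mem_univ i) h

lemma kron_right {n : ℕ} (w : Fin n → ℝ) (D : Matrix (Fin n) (Fin n) ℝ)
    (y : Fin n × Fin n → ℝ) (i j : Fin n) :
    (D ⊗ₖ (Matrix.diagonal w)).transpose.mulVec y (i, j)
      = w j * ∑ k, D k i * y (k, j) := by
  classical
  simp only [Matrix.mulVec, dotProduct, Matrix.transpose_apply,
    Matrix.kroneckerMap_apply, Fintype.sum_prod_type]
  rw [Finset.mul_sum]
  refine Finset.sum_congr rfl fun k _ => ?_
  rw [Finset.sum_eq_single j]
  · rw [Matrix.diagonal_apply_eq]; ring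
  · intro l _ hl
    rw [Matrix.diagonal_apply_ne w hl, mul_zero, zero_mul]
  · intro h; exact absurd (Finset.mem_univ j) h

end MetricAux

/-- Solvability of the two-dimensional conservative metric-term correction
system: for any diagonal matrix `M` with positive diagonal and any right-hand
side `b` whose entries sum to zero, the underdetermined system
`(M ⊗ D̂)ᵀ x + (D̂ ⊗ M)ᵀ y = b` has a solution. -/
theorem metric_correction_solvable (p : ℕ) (hp : 1 ≤ p)
    (w : Fin (p + 1) → ℝ) (hw : ∀ i, 0 < w i)
    (b : Fin (p + 1) × Fin (p + 1) → ℝ)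
    (hb : ∑ ij : Fin (p + 1) × Fin (p + 1), b ij = 0) :
    ∃ x y : Fin (p + 1) × Fin (p + 1) → ℝ,
      ((Matrix.diagonal w) ⊗ₖ (sparseDiff p)).transpose.mulVec x
        + ((sparseDiff p) ⊗ₖ (Matrix.diagonal w)).transpose.mulVec y = b := by
  classical
  set r : Fin (p+1) → ℝ := fun i => ∑ jj, b (i, jj) with hr
  have hrsum : ∑ i, r i = 0 := by
    have h := hb
    rw [Fintype.sum_prod_type] at h
    simpa [hr] using h
  -- row corrections
  have hrow : ∀ i : Fin (p+1),
      ∑ jj, (b (i, jj) - r i / (p+1)) / w i = 0 := by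
    intro i
    rw [← Finset.sum_div]
    rw [Finset.sum_sub_distrib]
    have : ∑ jj : Fin (p+1), r i / (p+1) = r i := by
      rw [Finset.sum_const, Finset.card_univ, Fintype.card_fin, nsmul_eq_mul]
      push_cast
      field_simp
    rw [this, hr]
    simp
  have hcol : ∀ j : Fin (p+1),
      ∑ k, (r k / (p+1)) / w j = 0 := by
    intro j
    rw [← Finset.sum_div, ← Finset.sum_div, hrsum]
    simp
  choose u hu using fun i : Fin (p+1) =>
    MetricAux.exists_solve p hp (fun jj => (b (i, jj) - r i / (p+1)) / w i) (hrow i)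
  choose v hv using fun j : Fin (p+1) =>
    MetricAux.exists_solve p hp (fun k => (r k / (p+1)) / w j) (hcol j)
  refine ⟨fun il => u il.1 il.2, fun kj => v kj.2 kj.1, ?_⟩
  funext ij
  obtain ⟨i, j⟩ := ij
  rw [Pi.add_apply, MetricAux.kron_left, MetricAux.kron_right]
  have h1 : ∑ l, sparseDiff p l j * u i l = (b (i, j) - r i / (p+1)) / w i := by
    rw [← MetricAux.mulVecT, hu i]
  have h2 : ∑ k, sparseDiff p k i * v j k = (r i / (p+1)) / w j := by
    rw [← MetricAux.mulVecT, hv j]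
  rw [h1, h2]
  have hwi : w i ≠ 0 := (hw i).ne'
  have hwj : w j ≠ 0 := (hw j).ne'
  have hp1 : (p : ℝ) + 1 ≠ 0 := by positivity
  field_simp
  ring
end
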